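/- Let u ∈ C^{2,α}(ℝ^d) with α ∈ (0,1]. Then for all x₁, x₂, h ∈ ℝ^d: |u(x₁+h) - u(x₁) - ∇u(x₁)·h - u(x₂+h) + u(x₂) + ∇u(x₂)·h| ≤ [u]_{2,α} (2|x₁-x₂|^{2+α} + |x₁-x₂|² |h|^α + |x₁-x₂| |h|^{1+α} + |x₁-x₂|^{1+α} |h|), where [u]_{2,α} is the Hölder seminorm of the Hessian. -/

import Mathlib

theorem taylor_difference_bound_C2alpha (d : ℕ) (α K : ℝ) (hα : α ∈ Set.Ioc (0:ℝ) 1)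
    (u : EuclideanSpace ℝ (Fin d) → ℝ) (hu : ContDiff ℝ 2 u)
    (hH : ∀ x y, ‖fderiv ℝ (fderiv ℝ u) x - fderiv ℝ (fderiv ℝ u) y‖ ≤ K * ‖x - y‖ ^ α) :
    ∀ x₁ x₂ h,
      |u (x₁ + h) - u x₁ - fderiv ℝ u x₁ h - u (x₂ + h) + u x₂ + fderiv ℝ u x₂ h|
        ≤ K * (2 * ‖x₁ - x₂‖ ^ (2 + α) + ‖x₁ - x₂‖ ^ (2:ℕ) * ‖h‖ ^ α
            + ‖x₁ - x₂‖ * ‖h‖ ^ (1 + α) + ‖x₁ - x₂‖ ^ (1 + α) * ‖h‖) := by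
  obtain ⟨hα0, hα1⟩ := hα
  intro x₁ x₂ h
  set G := fderiv ℝ u with hGdef
  set H := fderiv ℝ G with hHdef
  by_cases hx : x₁ = x₂
  · subst hx
    simp [Real.zero_rpow (by positivity : (2:ℝ) + α ≠ 0),
      Real.zero_rpow (by positivity : (1:ℝ) + α ≠ 0)]
    ring
  -- K ≥ 0
  have hK : 0 ≤ K := by
    have h1 := hH x₁ x₂
    have h2 : (0:ℝ) < ‖x₁ - x₂‖ ^ α :=
      Real.rpow_pos_of_pos (by simpa [sub_eq_zero] using hx) α
    nlinarith [norm_nonneg (H x₁ - H x₂)]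
  have huG : ContDiff ℝ 1 G := hu.fderiv_right (by norm_num)
  have hGd : ∀ x, HasFDerivAt u (G x) x := fun x =>
    (hu.differentiable (by norm_num) x).hasFDerivAt
  have hHd : ∀ x, HasFDerivAt G (H x) x := fun x =>
    (huG.differentiable (by norm_num) x).hasFDerivAt
  -- key bound on second-order difference of G
  have key : ∀ x, ‖G (x + h) - G x - H x h‖ ≤ (K * ‖h‖ ^ α) * ‖h‖ := by
    intro x
    set Φ : EuclideanSpace ℝ (Fin d) → (EuclideanSpace ℝ (Fin d) →L[ℝ] ℝ) :=
      fun y => G y - H x y with hΦdef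
    have hseg : segment ℝ x (x + h) ⊆ Metric.closedBall x ‖h‖ := by
      apply (convex_closedBall x ‖h‖).segment_subset
      · simp
      · simp [dist_eq_norm]
    have hΦd : ∀ y ∈ segment ℝ x (x + h),
        HasFDerivWithinAt Φ (H y - H x) (segment ℝ x (x + h)) y := by
      intro y _
      exact ((hHd y).sub (H x).hasFDerivAt).hasFDerivWithinAt
    have hbound : ∀ y ∈ segment ℝ x (x + h), ‖H y - H x‖ ≤ K * ‖h‖ ^ α := by
      intro y hy
      refine (hH y x).trans ?_
      have : ‖y - x‖ ≤ ‖h‖ := by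
        have := hseg hy
        simpa [dist_eq_norm] using this
      exact mul_le_mul_of_nonneg_left
        (Real.rpow_le_rpow (norm_nonneg _) this hα0.le) hK
    have := (convex_segment x (x + h)).norm_image_sub_le_of_norm_hasFDerivWithin_le
      hΦd hbound (left_mem_segment ℝ x (x + h)) (right_mem_segment ℝ x (x + h))
    have hΦeq : Φ (x + h) - Φ x = G (x + h) - G x - H x h := by
      simp only [hΦdef]
      rw [show (x + h) = x + h from rfl]
      abel_nf
      rw [map_add]
      abel
    rw [hΦeq] at this
    simpa using this
  -- derivative of F
  set F : EuclideanSpace ℝ (Fin d) → ℝ := fun x => u (x + h) - u x - G x h with hFdef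
  set F' : EuclideanSpace ℝ (Fin d) → (EuclideanSpace ℝ (Fin d) →L[ℝ] ℝ) :=
    fun x => G (x + h) - G x - (H x).flip h with hF'def
  have hFd : ∀ x, HasFDerivAt F (F' x) x := by
    intro x
    have h1 : HasFDerivAt (fun x => u (x + h)) ((G (x + h)).comp (ContinuousLinearMap.id ℝ _)) x :=
      (hGd (x + h)).comp x ((hasFDerivAt_id x).add_const h)
    have h2 : HasFDerivAt (fun x => G x h)
        ((G x).comp (0 : EuclideanSpace ℝ (Fin d) →L[ℝ] EuclideanSpace ℝ (Fin d)) + (H x).flip h) x := by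
      exact (hHd x).clm_apply (hasFDerivAt_const h x)
    have := (h1.sub (hGd x)).sub h2
    refine HasFDerivAt.congr_fderiv this ?_
    ext v
    simp [F']
  -- bound on ‖F' x‖ using symmetry of the second derivative
  have hF'bound : ∀ x, ‖F' x‖ ≤ (K * ‖h‖ ^ α) * ‖h‖ := by
    intro x
    have hsym : ∀ v, (H x v) h = (H x h) v := fun v =>
      second_derivative_symmetric hGd (hHd x) v h
    have heq : F' x = G (x + h) - G x - H x h := by
      ext v
      simp [hF'def, hsym v]
    rw [heq]
    exact key x
  -- mean value inequality on univ
  have main : ‖F x₁ - F x₂‖ ≤ (K * ‖h‖ ^ α) * ‖h‖ * ‖x₁ - x₂‖ :=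
    convex_univ.norm_image_sub_le_of_norm_hasFDerivWithin_le
      (fun x _ => (hFd x).hasFDerivWithinAt)
      (fun x _ => hF'bound x) (Set.mem_univ x₂) (Set.mem_univ x₁)
  have hLHS : |u (x₁ + h) - u x₁ - G x₁ h - u (x₂ + h) + u x₂ + G x₂ h|
      = ‖F x₁ - F x₂‖ := by
    rw [Real.norm_eq_abs]
    simp only [hFdef]
    ring_nf
  have hrw : ‖h‖ ^ (1 + α) = ‖h‖ * ‖h‖ ^ α := by
    rw [Real.rpow_add' (norm_nonneg h) (by positivity), Real.rpow_one]
  calc |u (x₁ + h) - u x₁ - G x₁ h - u (x₂ + h) + u x₂ + G x₂ h|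
      = ‖F x₁ - F x₂‖ := hLHS
    _ ≤ (K * ‖h‖ ^ α) * ‖h‖ * ‖x₁ - x₂‖ := main
    _ = K * (‖x₁ - x₂‖ * ‖h‖ ^ (1 + α)) := by rw [hrw]; ring
    _ ≤ K * (2 * ‖x₁ - x₂‖ ^ (2 + α) + ‖x₁ - x₂‖ ^ (2:ℕ) * ‖h‖ ^ α
            + ‖x₁ - x₂‖ * ‖h‖ ^ (1 + α) + ‖x₁ - x₂‖ ^ (1 + α) * ‖h‖) := by
        apply mul_le_mul_of_nonneg_left _ hK
        have t1 : (0:ℝ) ≤ ‖x₁ - x₂‖ ^ (2 + α) := Real.rpow_nonneg (norm_nonneg _) _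
        have t2 : (0:ℝ) ≤ ‖x₁ - x₂‖ ^ (2:ℕ) * ‖h‖ ^ α := by positivity
        have t3 : (0:ℝ) ≤ ‖x₁ - x₂‖ ^ (1 + α) * ‖h‖ := by
          have : (0:ℝ) ≤ ‖x₁ - x₂‖ ^ (1 + α) := Real.rpow_nonneg (norm_nonneg _) _
          positivity
        linarith
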